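/- Consider a 5-path-center configuration in a finite simple graph G with A2 = {i} and A1 = ∅. Then G contains a collection of vertex-disjoint paths, each of order at least 4, covering in total: at least 9 vertices if i ∈ {1,5}; at least 6 vertices if i ∈ {2,4}; and at least 5 vertices if i = 3. -/

import Mathlib

open SimpleGraph

/-- Degree of a vertex in a subgraph, via `Set.ncard` of the neighbor set. -/
noncomputable def subDeg {V : Type*} {G : SimpleGraph V} (H : G.Subgraph) (v : V) : ℕ :=
  (H.neighborSet v).ncard

/-- A subgraph is a path: it is a single vertex, or it is connected with exactly two
vertices of degree 1 and all other vertices of degree 2. -/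
def IsPathSubgraph {V : Type*} {G : SimpleGraph V} (P : G.Subgraph) : Prop :=
  P.Connected ∧
  ((∃ v, P.verts = {v}) ∨
    (({v ∈ P.verts | subDeg P v = 1}).ncard = 2 ∧
      ∀ v ∈ P.verts, subDeg P v = 1 ∨ subDeg P v = 2))

/-- `x` is an endpoint of the path subgraph `P` (for paths of order at least 2). -/
def IsPathEndpoint {V : Type*} {G : SimpleGraph V} (P : G.Subgraph) (x : V) : Prop :=
  x ∈ P.verts ∧ subDeg P x = 1

/-- A matching of `G`: a finite set of edges of `G`, no two of which share an endpoint. -/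
def IsMatchingSet {V : Type*} (G : SimpleGraph V) (M : Finset (Sym2 V)) : Prop :=
  ↑M ⊆ G.edgeSet ∧ ∀ e ∈ M, ∀ f ∈ M, e ≠ f → ∀ v : V, v ∈ e → v ∉ f

/-- A maximum matching of `G`. -/
def IsMaxMatchingSet {V : Type*} (G : SimpleGraph V) (M : Finset (Sym2 V)) : Prop :=
  IsMatchingSet G M ∧ ∀ M' : Finset (Sym2 V), IsMatchingSet G M' → M'.card ≤ M.card

/-- There is a collection of vertex-disjoint path subgraphs of `G`, each of order at
least 4, whose total number of vertices `n` satisfies `p n`. -/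
def HasDisjointPathsCovering {V : Type*} (G : SimpleGraph V) (p : ℕ → Prop) : Prop :=
  ∃ Ps : Set G.Subgraph,
    (∀ P ∈ Ps, IsPathSubgraph P ∧ 4 ≤ P.verts.ncard) ∧
    (Ps.Pairwise fun P Q => Disjoint P.verts Q.verts) ∧
    p ((⋃ P ∈ Ps, P.verts).ncard)

/-- There is a collection of vertex-disjoint path subgraphs of `G`, each of order at
least 4, covering at least `N` vertices in total. -/
def HasDisjointPathCover {V : Type*} (G : SimpleGraph V) (N : ℕ) : Prop :=
  HasDisjointPathsCovering G fun n => N ≤ n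

/-- `opt G`: the maximum total number of vertices in a collection of vertex-disjoint
paths of `G`, each of order at least 4. -/
noncomputable def optValue {V : Type*} (G : SimpleGraph V) : ℕ :=
  sSup {n : ℕ |
    ∃ Ps : Set G.Subgraph,
      (∀ P ∈ Ps, IsPathSubgraph P ∧ 4 ≤ P.verts.ncard) ∧
      (Ps.Pairwise fun P Q => Disjoint P.verts Q.verts) ∧
      n = (⋃ P ∈ Ps, P.verts).ncard}

/-- Degree of a vertex in the spanning subgraph determined by an edge set `F`. -/
noncomputable def edgeDeg {W : Type*} (F : Set (Sym2 W)) (v : W) : ℕ :=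
  {e ∈ F | v ∈ e}.ncard

/-- An edge set `C` saturates a vertex set `B` if some edge of `C` has an endpoint in `B`. -/
def Saturates {W : Type*} (C : Set (Sym2 W)) (B : Set W) : Prop :=
  ∃ e ∈ C, ∃ v ∈ B, v ∈ e

/-- A 5-path-center configuration in `G`: a path `v 0 – v 1 – v 2 – v 3 – v 4` in `G`
(indices `0,…,4` correspond to `v1,…,v5`), disjoint index sets `A1` (1-anchors) and
`A2` (2-anchors), pairwise disjoint sets `U i` avoiding the `v i`'s, for each
`i ∈ A1 ∪ A2` a path `Q i` of order at least 3 with endpoint `v i` and all other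
vertices in `U i`, and for each `i ∈ A2` additionally a path `P i` of order at least 5
with `v i ∈ V(P i) ⊆ {v i} ∪ U i`. -/
structure FivePathConfig {V : Type*} (G : SimpleGraph V) where
  v : Fin 5 → V
  inj : Function.Injective v
  adj : ∀ i : Fin 4, G.Adj (v i.castSucc) (v i.succ)
  A1 : Finset (Fin 5)
  A2 : Finset (Fin 5)
  hA : Disjoint A1 A2
  U : Fin 5 → Set V
  hUv : ∀ i ∈ A1 ∪ A2, Disjoint (U i) (Set.range v)
  hUdisj : ∀ i ∈ A1 ∪ A2, ∀ j ∈ A1 ∪ A2, i ≠ j → Disjoint (U i) (U j)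
  Q : Fin 5 → G.Subgraph
  hQpath : ∀ i ∈ A1 ∪ A2, IsPathSubgraph (Q i)
  hQcard : ∀ i ∈ A1 ∪ A2, 3 ≤ (Q i).verts.ncard
  hQend : ∀ i ∈ A1 ∪ A2, IsPathEndpoint (Q i) (v i)
  hQverts : ∀ i ∈ A1 ∪ A2, (Q i).verts ⊆ insert (v i) (U i)
  P : Fin 5 → G.Subgraph
  hPpath : ∀ i ∈ A2, IsPathSubgraph (P i)
  hPcard : ∀ i ∈ A2, 5 ≤ (P i).verts.ncard
  hPv : ∀ i ∈ A2, v i ∈ (P i).verts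
  hPverts : ∀ i ∈ A2, (P i).verts ⊆ insert (v i) (U i)

set_option linter.unusedSectionVars false

section helpers
variable {V : Type*} [Fintype V] [DecidableEq V] {G : SimpleGraph V}

lemma subgraphOfAdj_nbr {x w u : V} (h : G.Adj x w) :
    (G.subgraphOfAdj h).neighborSet u = if u = x then {w} else if u = w then {x} else ∅ := by
  ext b
  simp only [Subgraph.mem_neighborSet, subgraphOfAdj_adj, Sym2.eq, Sym2.rel_iff', Prod.mk.injEq,
    Prod.swap_prod_mk]
  have hne := h.ne
  split_ifs with h1 h2 <;> subst_vars <;>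
    simp only [Set.mem_singleton_iff, Set.mem_empty_iff_false] <;> constructor
  · rintro (⟨-, rfl⟩ | ⟨rfl, rfl⟩)
    · rfl
    · rfl
  · rintro rfl; tauto
  · rintro (⟨rfl, rfl⟩ | ⟨rfl, -⟩)
    · rfl
    · rfl
  · rintro rfl; tauto
  · rintro (⟨rfl, rfl⟩ | ⟨rfl, rfl⟩)
    · exact absurd rfl h1
    · exact absurd rfl h2
  · rintro ⟨⟩

lemma extend_path {P : G.Subgraph} (hP : IsPathSubgraph P) {x w : V}
    (hx : IsPathEndpoint P x) (hw : w ∉ P.verts) (hadj : G.Adj x w) :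
    IsPathSubgraph (P ⊔ G.subgraphOfAdj hadj) ∧
    IsPathEndpoint (P ⊔ G.subgraphOfAdj hadj) w ∧
    (P ⊔ G.subgraphOfAdj hadj).verts = insert w P.verts := by
  obtain ⟨hxm, hxd⟩ := hx
  have hxw : x ≠ w := hadj.ne
  set S := G.subgraphOfAdj hadj with hS
  have hverts : (P ⊔ S).verts = insert w P.verts := by
    rw [Subgraph.verts_sup, hS]
    simp only [subgraphOfAdj_verts]
    ext u
    simp only [Set.mem_union, Set.mem_insert_iff, Set.mem_singleton_iff]
    constructor
    · rintro (h | rfl | rfl) <;> tauto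
    · tauto
  -- neighbor set computations
  have hnb : ∀ u, (P ⊔ S).neighborSet u = P.neighborSet u ∪ S.neighborSet u :=
    fun u => Subgraph.neighborSet_sup u
  obtain ⟨y, hy⟩ : ∃ y, P.neighborSet x = {y} := Set.ncard_eq_one.mp hxd
  have hyP : y ∈ P.verts := by
    have : P.Adj x y := by rw [← Subgraph.mem_neighborSet, hy]; rfl
    exact this.snd_mem
  have hyw : y ≠ w := fun h => hw (h ▸ hyP)
  have dw : subDeg (P ⊔ S) w = 1 := by
    have : (P ⊔ S).neighborSet w = {x} := by
      rw [hnb, subgraphOfAdj_nbr, if_neg hxw.symm, if_pos rfl]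
      have : P.neighborSet w = ∅ := by
        ext u; simp only [Subgraph.mem_neighborSet, Set.mem_empty_iff_false, iff_false]
        exact fun h => hw h.fst_mem
      rw [this, Set.empty_union]
    rw [subDeg, this, Set.ncard_singleton]
  have dx : subDeg (P ⊔ S) x = 2 := by
    have : (P ⊔ S).neighborSet x = {y, w} := by
      rw [hnb, subgraphOfAdj_nbr, if_pos rfl, hy]
      ext u; simp [Set.mem_insert_iff, or_comm]
    rw [subDeg, this, Set.ncard_pair hyw]
  have du : ∀ u, u ≠ x → u ≠ w → subDeg (P ⊔ S) u = subDeg P u := by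
    intro u hux huw
    have : (P ⊔ S).neighborSet u = P.neighborSet u := by
      rw [hnb, subgraphOfAdj_nbr, if_neg hux, if_neg huw, Set.union_empty]
    rw [subDeg, this]; rfl
  -- connectivity
  have hconn : (P ⊔ S).Connected := by
    refine Subgraph.connected_sup hP.1.preconnected (Subgraph.subgraphOfAdj_connected hadj).preconnected ⟨x, ?_⟩
    rw [Subgraph.verts_inf]
    exact ⟨hxm, by simp [hS]⟩
  -- P is not a singleton
  have hcase : ({v ∈ P.verts | subDeg P v = 1}).ncard = 2 ∧
      ∀ v ∈ P.verts, subDeg P v = 1 ∨ subDeg P v = 2 := by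
    rcases hP.2 with ⟨v, hv⟩ | h
    · exfalso
      have hxv : x = v := by rw [hv] at hxm; exact hxm
      have : P.neighborSet x = ∅ := by
        ext u; simp only [Subgraph.mem_neighborSet, Set.mem_empty_iff_false, iff_false]
        intro h
        have h1 : u ∈ P.verts := h.snd_mem
        rw [hv, Set.mem_singleton_iff] at h1
        subst h1
        exact P.loopless.irrefl u (hxv ▸ h)
      rw [subDeg, this, Set.ncard_empty] at hxd
      exact absurd hxd one_ne_zero.symm
    · exact h
  have hEset : {u ∈ (P ⊔ S).verts | subDeg (P ⊔ S) u = 1}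
      = insert w ({u ∈ P.verts | subDeg P u = 1} \ {x}) := by
    ext u
    simp only [Set.mem_setOf_eq, Set.mem_insert_iff, Set.mem_diff, Set.mem_singleton_iff, hverts]
    constructor
    · rintro ⟨hm, hd⟩
      rcases hm with rfl | hm
      · left; rfl
      · right
        have huw : u ≠ w := fun h => hw (h ▸ hm)
        have hux : u ≠ x := by
          rintro rfl; rw [dx] at hd; omega
        rw [du u hux huw] at hd
        exact ⟨⟨hm, hd⟩, hux⟩
    · rintro (rfl | ⟨⟨hm, hd⟩, hux⟩)
      · exact ⟨Or.inl rfl, dw⟩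
      · have huw : u ≠ w := fun h => hw (h ▸ hm)
        exact ⟨Or.inr hm, by rw [du u hux huw]; exact hd⟩
  have hEcard : ({u ∈ (P ⊔ S).verts | subDeg (P ⊔ S) u = 1}).ncard = 2 := by
    rw [hEset]
    have hwn : w ∉ ({u ∈ P.verts | subDeg P u = 1} \ {x}) := by
      rintro ⟨⟨hm, _⟩, _⟩; exact hw hm
    rw [Set.ncard_insert_of_notMem hwn (Set.toFinite _)]
    have hxE : x ∈ {u ∈ P.verts | subDeg P u = 1} := ⟨hxm, hxd⟩
    rw [Set.ncard_diff_singleton_of_mem hxE, hcase.1]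
  refine ⟨⟨hconn, Or.inr ⟨hEcard, ?_⟩⟩, ⟨by rw [hverts]; exact Set.mem_insert _ _, dw⟩, hverts⟩
  intro u hu
  rw [hverts] at hu
  rcases hu with rfl | hu
  · left; exact dw
  · by_cases hux : u = x
    · right; rw [hux]; exact dx
    · have huw : u ≠ w := fun h => hw (h ▸ hu)
      rw [du u hux huw]
      exact hcase.2 u hu

lemma subgraphOfAdj_isPath {x w : V} (hadj : G.Adj x w) :
    IsPathSubgraph (G.subgraphOfAdj hadj) ∧ IsPathEndpoint (G.subgraphOfAdj hadj) x ∧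
    IsPathEndpoint (G.subgraphOfAdj hadj) w := by
  have dx : subDeg (G.subgraphOfAdj hadj) x = 1 := by
    rw [subDeg, subgraphOfAdj_nbr, if_pos rfl, Set.ncard_singleton]
  have dw : subDeg (G.subgraphOfAdj hadj) w = 1 := by
    rw [subDeg, subgraphOfAdj_nbr, if_neg hadj.ne.symm, if_pos rfl, Set.ncard_singleton]
  have hE : {u ∈ (G.subgraphOfAdj hadj).verts | subDeg (G.subgraphOfAdj hadj) u = 1} = {x, w} := by
    ext u
    simp only [Set.mem_setOf_eq, subgraphOfAdj_verts, Set.mem_insert_iff, Set.mem_singleton_iff]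
    constructor
    · rintro ⟨hm, _⟩; exact hm
    · rintro (rfl | rfl)
      · exact ⟨Or.inl rfl, dx⟩
      · exact ⟨Or.inr rfl, dw⟩
  refine ⟨⟨Subgraph.subgraphOfAdj_connected hadj, Or.inr ⟨by rw [hE, Set.ncard_pair hadj.ne], ?_⟩⟩,
    ⟨by simp, dx⟩, ⟨by simp, dw⟩⟩
  rintro u (rfl | rfl)
  · exact Or.inl dx
  · exact Or.inl dw

end helpers

section covers
variable {V : Type*} [Fintype V] {G : SimpleGraph V}

lemma cover_single {R : G.Subgraph} (h : IsPathSubgraph R) {N : ℕ}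
    (h4 : 4 ≤ R.verts.ncard) (hN : N ≤ R.verts.ncard) : HasDisjointPathCover G N := by
  refine ⟨{R}, ?_, Set.pairwise_singleton _ _, ?_⟩
  · rintro P rfl; exact ⟨h, h4⟩
  · rwa [Set.biUnion_singleton]

lemma cover_pair {A B : G.Subgraph} (hA : IsPathSubgraph A) (hB : IsPathSubgraph B)
    (h4A : 4 ≤ A.verts.ncard) (h4B : 4 ≤ B.verts.ncard)
    (hd : Disjoint A.verts B.verts) {N : ℕ}
    (hN : N ≤ A.verts.ncard + B.verts.ncard) : HasDisjointPathCover G N := by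
  have hne : A ≠ B := by
    rintro rfl
    rw [disjoint_self] at hd
    rw [hd] at h4A
    simp at h4A
  refine ⟨{A, B}, ?_, ?_, ?_⟩
  · rintro P (rfl | rfl)
    · exact ⟨hA, h4A⟩
    · exact ⟨hB, h4B⟩
  · rintro P (rfl | rfl) Q (rfl | rfl) hPQ
    · exact absurd rfl hPQ
    · exact hd
    · exact hd.symm
    · exact absurd rfl hPQ
  · rw [Set.biUnion_pair, Set.ncard_union_eq hd (Set.toFinite _) (Set.toFinite _)]
    exact hN

end covers

/-- a 5-path-center configuration with `A2 = {i}` and `A1 = ∅` yields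
vertex-disjoint `4⁺`-paths covering at least 9 vertices if `i ∈ {1,5}` (indices `0,4`),
at least 6 if `i ∈ {2,4}` (indices `1,3`), and at least 5 if `i = 3` (index `2`). -/
theorem stmt16 {V : Type*} [Fintype V] [DecidableEq V] (G : SimpleGraph V)
    (cfg : FivePathConfig G) (i : Fin 5)
    (h2 : cfg.A2 = {i}) (h1 : cfg.A1 = ∅) :
    ((i = 0 ∨ i = 4) → HasDisjointPathCover G 9) ∧
    ((i = 1 ∨ i = 3) → HasDisjointPathCover G 6) ∧
    (i = 2 → HasDisjointPathCover G 5) := by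
  have hiA2 : i ∈ cfg.A2 := by rw [h2]; exact Finset.mem_singleton_self i
  have hiU : i ∈ cfg.A1 ∪ cfg.A2 := Finset.mem_union_right _ hiA2
  have hvne : ∀ j k : Fin 5, j ≠ k → cfg.v j ≠ cfg.v k := fun j k h hh => h (cfg.inj hh)
  have hvU : ∀ j : Fin 5, cfg.v j ∉ cfg.U i := fun j h =>
    Set.disjoint_left.mp (cfg.hUv i hiU) h ⟨j, rfl⟩
  have hvP : ∀ j : Fin 5, j ≠ i → cfg.v j ∉ (cfg.P i).verts := by
    intro j hj hmem
    rcases cfg.hPverts i hiA2 hmem with h | h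
    · exact hvne j i hj h
    · exact hvU j h
  have hvQ : ∀ j : Fin 5, j ≠ i → cfg.v j ∉ (cfg.Q i).verts := by
    intro j hj hmem
    rcases cfg.hQverts i hiU hmem with h | h
    · exact hvne j i hj h
    · exact hvU j h
  have h01 : G.Adj (cfg.v 0) (cfg.v 1) := cfg.adj 0
  have h12 : G.Adj (cfg.v 1) (cfg.v 2) := cfg.adj 1
  have h23 : G.Adj (cfg.v 2) (cfg.v 3) := cfg.adj 2
  have h34 : G.Adj (cfg.v 3) (cfg.v 4) := cfg.adj 3
  refine ⟨?_, ?_, ?_⟩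
  · -- i = 0 or i = 4 : use P i together with a 4-path on the other four v's
    rintro (rfl | rfl)
    · -- i = 0 : path v1 v2 v3 v4
      obtain ⟨hS0, hS0e, -, -⟩ := subgraphOfAdj_isPath h12
      obtain ⟨hS1, hS1e, hS1v⟩ := extend_path hS0 (subgraphOfAdj_isPath h12).2.2
        (by simp only [subgraphOfAdj_verts, Set.mem_insert_iff, Set.mem_singleton_iff, not_or]
            exact ⟨hvne 3 1 (by decide), hvne 3 2 (by decide)⟩) h23
      obtain ⟨hS2, hS2e, hS2v⟩ := extend_path hS1 hS1e
        (by rw [hS1v]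
            simp only [subgraphOfAdj_verts, Set.mem_insert_iff, Set.mem_singleton_iff, not_or]
            exact ⟨hvne 4 3 (by decide), hvne 4 1 (by decide), hvne 4 2 (by decide)⟩) h34
      have hScard : (G.subgraphOfAdj h12 ⊔ G.subgraphOfAdj h23 ⊔ G.subgraphOfAdj h34).verts.ncard
          = 4 := by
        rw [hS2v, hS1v]
        rw [Set.ncard_insert_of_notMem (by
          simp only [subgraphOfAdj_verts, Set.mem_insert_iff, Set.mem_singleton_iff, not_or]
          exact ⟨hvne 4 3 (by decide), hvne 4 1 (by decide), hvne 4 2 (by decide)⟩)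
          (Set.toFinite _)]
        rw [Set.ncard_insert_of_notMem (by
          simp only [subgraphOfAdj_verts, Set.mem_insert_iff, Set.mem_singleton_iff, not_or]
          exact ⟨hvne 3 1 (by decide), hvne 3 2 (by decide)⟩) (Set.toFinite _)]
        simp only [subgraphOfAdj_verts]
        rw [Set.ncard_insert_of_notMem (by
          simp only [Set.mem_singleton_iff]
          exact hvne 1 2 (by decide)) (Set.toFinite _), Set.ncard_singleton]
      have hdisj : Disjoint (cfg.P 0).verts
          (G.subgraphOfAdj h12 ⊔ G.subgraphOfAdj h23 ⊔ G.subgraphOfAdj h34).verts := by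
        rw [Set.disjoint_right, hS2v, hS1v]
        rintro a ha hmem
        simp only [subgraphOfAdj_verts, Set.mem_insert_iff, Set.mem_singleton_iff] at ha
        rcases ha with rfl | rfl | rfl | rfl
        · exact hvP 4 (by decide) hmem
        · exact hvP 3 (by decide) hmem
        · exact hvP 1 (by decide) hmem
        · exact hvP 2 (by decide) hmem
      refine cover_pair (cfg.hPpath 0 hiA2) hS2 (le_trans (by norm_num) (cfg.hPcard 0 hiA2))
        (le_of_eq hScard.symm) hdisj ?_
      rw [hScard]
      have := cfg.hPcard 0 hiA2
      omega
    · -- i = 4 : path v0 v1 v2 v3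
      obtain ⟨hS0, -, -⟩ := subgraphOfAdj_isPath h01
      obtain ⟨hS1, hS1e, hS1v⟩ := extend_path hS0 (subgraphOfAdj_isPath h01).2.2
        (by simp only [subgraphOfAdj_verts, Set.mem_insert_iff, Set.mem_singleton_iff, not_or]
            exact ⟨hvne 2 0 (by decide), hvne 2 1 (by decide)⟩) h12
      obtain ⟨hS2, hS2e, hS2v⟩ := extend_path hS1 hS1e
        (by rw [hS1v]
            simp only [subgraphOfAdj_verts, Set.mem_insert_iff, Set.mem_singleton_iff, not_or]
            exact ⟨hvne 3 2 (by decide), hvne 3 0 (by decide), hvne 3 1 (by decide)⟩) h23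
      have hScard : (G.subgraphOfAdj h01 ⊔ G.subgraphOfAdj h12 ⊔ G.subgraphOfAdj h23).verts.ncard
          = 4 := by
        rw [hS2v, hS1v]
        rw [Set.ncard_insert_of_notMem (by
          simp only [subgraphOfAdj_verts, Set.mem_insert_iff, Set.mem_singleton_iff, not_or]
          exact ⟨hvne 3 2 (by decide), hvne 3 0 (by decide), hvne 3 1 (by decide)⟩)
          (Set.toFinite _)]
        rw [Set.ncard_insert_of_notMem (by
          simp only [subgraphOfAdj_verts, Set.mem_insert_iff, Set.mem_singleton_iff, not_or]
          exact ⟨hvne 2 0 (by decide), hvne 2 1 (by decide)⟩) (Set.toFinite _)]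
        simp only [subgraphOfAdj_verts]
        rw [Set.ncard_insert_of_notMem (by
          simp only [Set.mem_singleton_iff]
          exact hvne 0 1 (by decide)) (Set.toFinite _), Set.ncard_singleton]
      have hdisj : Disjoint (cfg.P 4).verts
          (G.subgraphOfAdj h01 ⊔ G.subgraphOfAdj h12 ⊔ G.subgraphOfAdj h23).verts := by
        rw [Set.disjoint_right, hS2v, hS1v]
        rintro a ha hmem
        simp only [subgraphOfAdj_verts, Set.mem_insert_iff, Set.mem_singleton_iff] at ha
        rcases ha with rfl | rfl | rfl | rfl
        · exact hvP 3 (by decide) hmem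
        · exact hvP 2 (by decide) hmem
        · exact hvP 0 (by decide) hmem
        · exact hvP 1 (by decide) hmem
      refine cover_pair (cfg.hPpath 4 hiA2) hS2 (le_trans (by norm_num) (cfg.hPcard 4 hiA2))
        (le_of_eq hScard.symm) hdisj ?_
      rw [hScard]
      have := cfg.hPcard 4 hiA2
      omega
  · -- i = 1 or i = 3 : extend Q i by three path vertices
    rintro (rfl | rfl)
    · -- i = 1 : Q 1 extended by v2, v3, v4
      obtain ⟨hR1, hR1e, hR1v⟩ := extend_path (cfg.hQpath 1 hiU) (cfg.hQend 1 hiU)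
        (hvQ 2 (by decide)) h12
      obtain ⟨hR2, hR2e, hR2v⟩ := extend_path hR1 hR1e
        (by rw [hR1v]
            simp only [Set.mem_insert_iff, not_or]
            exact ⟨hvne 3 2 (by decide), hvQ 3 (by decide)⟩) h23
      obtain ⟨hR3, hR3e, hR3v⟩ := extend_path hR2 hR2e
        (by rw [hR2v, hR1v]
            simp only [Set.mem_insert_iff, not_or]
            exact ⟨hvne 4 3 (by decide), hvne 4 2 (by decide), hvQ 4 (by decide)⟩) h34
      have hcard : (cfg.Q 1).verts.ncard + 3
          ≤ (cfg.Q 1 ⊔ G.subgraphOfAdj h12 ⊔ G.subgraphOfAdj h23 ⊔ G.subgraphOfAdj h34).verts.ncard := by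
        rw [hR3v, hR2v, hR1v]
        rw [Set.ncard_insert_of_notMem (by
          simp only [Set.mem_insert_iff, not_or]
          exact ⟨hvne 4 3 (by decide), hvne 4 2 (by decide), hvQ 4 (by decide)⟩) (Set.toFinite _)]
        rw [Set.ncard_insert_of_notMem (by
          simp only [Set.mem_insert_iff, not_or]
          exact ⟨hvne 3 2 (by decide), hvQ 3 (by decide)⟩) (Set.toFinite _)]
        rw [Set.ncard_insert_of_notMem (hvQ 2 (by decide)) (Set.toFinite _)]
      have hq := cfg.hQcard 1 hiU
      exact cover_single hR3 (by omega) (by omega)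
    · -- i = 3 : Q 3 extended by v2, v1, v0
      have h32 : G.Adj (cfg.v 3) (cfg.v 2) := h23.symm
      have h21 : G.Adj (cfg.v 2) (cfg.v 1) := h12.symm
      have h10 : G.Adj (cfg.v 1) (cfg.v 0) := h01.symm
      obtain ⟨hR1, hR1e, hR1v⟩ := extend_path (cfg.hQpath 3 hiU) (cfg.hQend 3 hiU)
        (hvQ 2 (by decide)) h32
      obtain ⟨hR2, hR2e, hR2v⟩ := extend_path hR1 hR1e
        (by rw [hR1v]
            simp only [Set.mem_insert_iff, not_or]
            exact ⟨hvne 1 2 (by decide), hvQ 1 (by decide)⟩) h21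
      obtain ⟨hR3, hR3e, hR3v⟩ := extend_path hR2 hR2e
        (by rw [hR2v, hR1v]
            simp only [Set.mem_insert_iff, not_or]
            exact ⟨hvne 0 1 (by decide), hvne 0 2 (by decide), hvQ 0 (by decide)⟩) h10
      have hcard : (cfg.Q 3).verts.ncard + 3
          ≤ (cfg.Q 3 ⊔ G.subgraphOfAdj h32 ⊔ G.subgraphOfAdj h21 ⊔ G.subgraphOfAdj h10).verts.ncard := by
        rw [hR3v, hR2v, hR1v]
        rw [Set.ncard_insert_of_notMem (by
          simp only [Set.mem_insert_iff, not_or]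
          exact ⟨hvne 0 1 (by decide), hvne 0 2 (by decide), hvQ 0 (by decide)⟩) (Set.toFinite _)]
        rw [Set.ncard_insert_of_notMem (by
          simp only [Set.mem_insert_iff, not_or]
          exact ⟨hvne 1 2 (by decide), hvQ 1 (by decide)⟩) (Set.toFinite _)]
        rw [Set.ncard_insert_of_notMem (hvQ 2 (by decide)) (Set.toFinite _)]
      have hq := cfg.hQcard 3 hiU
      exact cover_single hR3 (by omega) (by omega)
  · -- i = 2 : P 2 alone
    rintro rfl
    have hp := cfg.hPcard 2 hiA2
    exact cover_single (cfg.hPpath 2 hiA2) (by omega) (by omega)
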